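/- Let (A,m,Δ,S) be a Hopf algebra and Φ(a⊗b) = Σ b⁽¹⁾ ⊗ S(b⁽²⁾)a. A linear form λ ∈ A* is a left counit of (A,Φ) (i.e. (λ⊗Id)∘Φ(a⊗b) = λ(b)a for all a,b) if and only if Σ λ(b⁽¹⁾)S(b⁽²⁾) = λ(b)·1_A for all b ∈ A. In particular every right integral λ on A (meaning (λ⊗μ)∘Δ = μ(1)λ for all μ ∈ A*) is a left counit of (A,Φ). -/

import Mathlib

open TensorProduct

/-- The flip of tensor factors. -/
noncomputable def tauMap (K A : Type*) [CommSemiring K] [AddCommMonoid A] [Module K A] :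
    A ⊗[K] A →ₗ[K] A ⊗[K] A :=
  (TensorProduct.comm K A A).toLinearMap

/-- `f ⊗ Id` viewed on `(A ⊗ A) ⊗ A`. -/
noncomputable def leftT (K A : Type*) [CommSemiring K] [AddCommMonoid A] [Module K A]
    (f : A ⊗[K] A →ₗ[K] A ⊗[K] A) : (A ⊗[K] A) ⊗[K] A →ₗ[K] (A ⊗[K] A) ⊗[K] A :=
  TensorProduct.map f LinearMap.id

/-- `Id ⊗ f` viewed on `(A ⊗ A) ⊗ A` via the associator. -/
noncomputable def rightT (K A : Type*) [CommSemiring K] [AddCommMonoid A] [Module K A]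
    (f : A ⊗[K] A →ₗ[K] A ⊗[K] A) : (A ⊗[K] A) ⊗[K] A →ₗ[K] (A ⊗[K] A) ⊗[K] A :=
  (TensorProduct.assoc K A A A).symm.toLinearMap ∘ₗ
    TensorProduct.map LinearMap.id f ∘ₗ (TensorProduct.assoc K A A A).toLinearMap

/-- The ℓEAS braid equation for a linear map `Φ : A ⊗ A → A ⊗ A`. -/
def IsLEAS (K A : Type*) [CommSemiring K] [AddCommMonoid A] [Module K A]
    (Φ : A ⊗[K] A →ₗ[K] A ⊗[K] A) : Prop :=
  rightT K A Φ ∘ₗ leftT K A Φ ∘ₗ rightT K A Φ =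
    leftT K A Φ ∘ₗ rightT K A (tauMap K A) ∘ₗ leftT K A Φ

/-- The ℓEAS map `Φ(a ⊗ b) = Σ b⁽¹⁾ ⊗ S(b⁽²⁾)a` of a Hopf algebra. -/
noncomputable def PhiHopf (K A : Type*) [Field K] [Ring A] [HopfAlgebra K A] :
    A ⊗[K] A →ₗ[K] A ⊗[K] A :=
  TensorProduct.map LinearMap.id
      (LinearMap.mul' K A ∘ₗ TensorProduct.map (HopfAlgebra.antipode (R := K)) LinearMap.id) ∘ₗ
    (TensorProduct.assoc K A A A).toLinearMap ∘ₗ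
    TensorProduct.map (Coalgebra.comul (R := K)) LinearMap.id ∘ₗ
    tauMap K A

section Aux

variable {K A : Type*} [Field K] [Ring A] [HopfAlgebra K A] (lam : A →ₗ[K] K)

lemma aux_antipode_one : HopfAlgebra.antipode (R := K) (1 : A) = 1 := by
  have h := HopfAlgebra.mul_antipode_rTensor_comul_apply (R := K) (A := A) (1 : A)
  rw [Bialgebra.comul_one, Algebra.TensorProduct.one_def] at h
  simpa using h

lemma aux_key (c : A ⊗[K] A) (a : A) :
    (TensorProduct.lid K A) ((TensorProduct.map lam LinearMap.id)
      ((TensorProduct.map LinearMap.id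
        (LinearMap.mul' K A ∘ₗ TensorProduct.map (HopfAlgebra.antipode (R := K)) LinearMap.id))
        ((TensorProduct.assoc K A A A) (c ⊗ₜ a)))) =
    ((TensorProduct.lid K A) ((TensorProduct.map lam (HopfAlgebra.antipode (R := K))) c)) * a := by
  induction c using TensorProduct.induction_on with
  | zero => rw [zero_tmul, LinearEquiv.map_zero]; simp
  | tmul x y => simp [smul_mul_assoc]
  | add x y hx hy => simp only [add_tmul, map_add, hx, hy, add_mul]

lemma aux_L_apply (a b : A) :
    ((TensorProduct.lid K A).toLinearMap ∘ₗ TensorProduct.map lam LinearMap.id ∘ₗ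
      PhiHopf K A) (a ⊗ₜ b) =
    ((TensorProduct.lid K A) ((TensorProduct.map lam (HopfAlgebra.antipode (R := K)))
      (Coalgebra.comul (R := K) b))) * a := by
  rw [← aux_key lam]
  rfl

lemma aux_R_apply (a b : A) :
    ((TensorProduct.lid K A).toLinearMap ∘ₗ TensorProduct.map lam LinearMap.id ∘ₗ
      tauMap K A) (a ⊗ₜ b) = lam b • a := rfl

lemma aux_mu (μ : A →ₗ[K] K) (c : A ⊗[K] A) :
    LinearMap.mul' K K ((TensorProduct.map lam μ) c) =
      μ ((TensorProduct.lid K A) ((TensorProduct.map lam LinearMap.id) c)) := by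
  induction c using TensorProduct.induction_on with
  | zero => simp
  | tmul x y => simp
  | add x y hx hy => simp only [map_add, hx, hy]

lemma aux_S (c : A ⊗[K] A) :
    (TensorProduct.lid K A) ((TensorProduct.map lam (HopfAlgebra.antipode (R := K))) c) =
      HopfAlgebra.antipode (R := K)
        ((TensorProduct.lid K A) ((TensorProduct.map lam LinearMap.id) c)) := by
  induction c using TensorProduct.induction_on with
  | zero => simp
  | tmul x y => simp
  | add x y hx hy => simp only [map_add, hx, hy]

end Aux

theorem stmt16 {K A : Type*} [Field K] [Ring A] [HopfAlgebra K A] (lam : A →ₗ[K] K) :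
    (((TensorProduct.lid K A).toLinearMap ∘ₗ TensorProduct.map lam LinearMap.id ∘ₗ
          PhiHopf K A =
        (TensorProduct.lid K A).toLinearMap ∘ₗ TensorProduct.map lam LinearMap.id ∘ₗ
          tauMap K A) ↔
      (TensorProduct.lid K A).toLinearMap ∘ₗ
          TensorProduct.map lam (HopfAlgebra.antipode (R := K)) ∘ₗ
          Coalgebra.comul (R := K) =
        lam.smulRight (1 : A)) ∧
    ((∀ μ : A →ₗ[K] K,
        LinearMap.mul' K K ∘ₗ TensorProduct.map lam μ ∘ₗ Coalgebra.comul (R := K) =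
          μ 1 • lam) →
      (TensorProduct.lid K A).toLinearMap ∘ₗ TensorProduct.map lam LinearMap.id ∘ₗ
          PhiHopf K A =
        (TensorProduct.lid K A).toLinearMap ∘ₗ TensorProduct.map lam LinearMap.id ∘ₗ
          tauMap K A) := by
  have hiff : ((TensorProduct.lid K A).toLinearMap ∘ₗ TensorProduct.map lam LinearMap.id ∘ₗ
          PhiHopf K A =
        (TensorProduct.lid K A).toLinearMap ∘ₗ TensorProduct.map lam LinearMap.id ∘ₗ
          tauMap K A) ↔
      ((TensorProduct.lid K A).toLinearMap ∘ₗ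
          TensorProduct.map lam (HopfAlgebra.antipode (R := K)) ∘ₗ
          Coalgebra.comul (R := K) =
        lam.smulRight (1 : A)) := Iff.intro
    (fun h => by
      ext b
      have := LinearMap.congr_fun h ((1 : A) ⊗ₜ b)
      rw [aux_L_apply, aux_R_apply, mul_one] at this
      simpa using this)
    (fun h => by
      apply TensorProduct.ext'
      intro a b
      rw [aux_L_apply, aux_R_apply]
      have hb := LinearMap.congr_fun h b
      simp only [LinearMap.coe_comp, LinearEquiv.coe_coe, Function.comp_apply,
        LinearMap.smulRight_apply, Module.End.one_apply] at hb
      rw [hb, smul_mul_assoc, one_mul])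
  refine ⟨hiff, fun hint => hiff.mpr ?_⟩
  ext b
  set v := (TensorProduct.lid K A) ((TensorProduct.map lam LinearMap.id)
    (Coalgebra.comul (R := K) b)) with hv
  have hveq : v = lam b • (1 : A) := by
    rw [← sub_eq_zero, ← Module.forall_dual_apply_eq_zero_iff K]
    intro μ
    have h1 := LinearMap.congr_fun (hint μ) b
    simp only [LinearMap.coe_comp, Function.comp_apply, LinearMap.smul_apply,
      smul_eq_mul] at h1
    rw [aux_mu] at h1
    simp [← hv, h1, mul_comm]
    rw [hv, h1]; ring
  have : (TensorProduct.lid K A) ((TensorProduct.map lam (HopfAlgebra.antipode (R := K)))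
      (Coalgebra.comul (R := K) b)) = lam b • (1 : A) := by
    rw [aux_S, ← hv, hveq, map_smul, aux_antipode_one]
  simpa using this
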